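/- arXiv:1703.04829 — 2 statements merged into one kernel-verified Lean document; each statement's English description precedes it below -/
import Mathlib

section
/- Let x, y, z ∈ ℂⁿ be vectors with x*x = y*y = z*z = 1, where x* denotes the conjugate transpose. Then √(1 − |x*y|²) ≤ √(1 − |x*z|²) + √(1 − |z*y|²). -/
open scoped BigOperators ComplexConjugate

local notation "⟪" x ", " y "⟫" => @inner ℂ _ _ x y

private lemma re_one_sub (w : ℂ) :
    RCLike.re (1 - (starRingEnd ℂ) w * w) = 1 - ‖(starRingEnd ℂ) w‖ ^ 2 := by
  rw [← Complex.normSq_eq_conj_mul_self]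
  simp [Complex.normSq_eq_norm_sq]
  norm_cast

private lemma real_alg (a b c s t : ℝ) (ha0 : 0 ≤ a) (hb0 : 0 ≤ b) (hc0 : 0 ≤ c)
    (ha1 : a ≤ 1) (hb1 : b ≤ 1) (hs0 : 0 ≤ s) (ht0 : 0 ≤ t)
    (hs2 : s ^ 2 = 1 - a ^ 2) (ht2 : t ^ 2 = 1 - b ^ 2) (hkey : a * b - s * t ≤ c) :
    Real.sqrt (1 - c ^ 2) ≤ s + t := by
  have hst2 : (s * t) ^ 2 = (1 - a ^ 2) * (1 - b ^ 2) := by rw [mul_pow, hs2, ht2]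
  have hab1 : a * b ≤ 1 := by nlinarith
  have hmain : 1 - c ^ 2 ≤ (s + t) ^ 2 := by
    rcases le_or_gt (s * t) (a * b) with h | h
    · have hcc : (a * b - s * t) ^ 2 ≤ c ^ 2 := by
        have h0 : 0 ≤ a * b - s * t := by linarith
        nlinarith
      have h3 : 0 ≤ s * t * (1 - a * b) :=
        mul_nonneg (mul_nonneg hs0 ht0) (by linarith)
      nlinarith [hcc, hst2, sq_nonneg (s * t), h3]
    · have h4 : 0 ≤ (s * t - a * b) * (a * b + s * t) :=
        mul_nonneg (by linarith) (by positivity)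
      nlinarith [sq_nonneg c, mul_nonneg hs0 ht0, hst2, h4, sq_nonneg (a * b)]
  calc Real.sqrt (1 - c ^ 2) ≤ Real.sqrt ((s + t) ^ 2) := Real.sqrt_le_sqrt hmain
  _ = s + t := Real.sqrt_sq (by linarith)

lemma key_ineq {E : Type*} [NormedAddCommGroup E] [InnerProductSpace ℂ E]
    (x y z : E) (hx : ‖x‖ = 1) (hy : ‖y‖ = 1) (hz : ‖z‖ = 1) :
    Real.sqrt (1 - ‖⟪x, y⟫‖ ^ 2) ≤
      Real.sqrt (1 - ‖⟪x, z⟫‖ ^ 2) + Real.sqrt (1 - ‖⟪z, y⟫‖ ^ 2) := by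
  have hxx : ⟪x, x⟫ = 1 := by rw [inner_self_eq_norm_sq_to_K, hx]; norm_num
  have hyy : ⟪y, y⟫ = 1 := by rw [inner_self_eq_norm_sq_to_K, hy]; norm_num
  have hzz : ⟪z, z⟫ = 1 := by rw [inner_self_eq_norm_sq_to_K, hz]; norm_num
  set u := x - ⟪z, x⟫ • z with hu
  set v := y - ⟪z, y⟫ • z with hv
  have huv : ⟪u, v⟫ = ⟪x, y⟫ - ⟪x, z⟫ * ⟪z, y⟫ := by
    simp only [hu, hv, inner_sub_left, inner_sub_right, inner_smul_left, inner_smul_right, hzz,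
      mul_one]
    rw [← inner_conj_symm x z]
    ring
  have huu : ⟪u, u⟫ = 1 - (starRingEnd ℂ) ⟪z, x⟫ * ⟪z, x⟫ := by
    simp only [hu, inner_sub_left, inner_sub_right, inner_smul_left, inner_smul_right, hzz,
      mul_one, hxx]
    rw [← inner_conj_symm x z]
    ring
  have hvv : ⟪v, v⟫ = 1 - (starRingEnd ℂ) ⟪z, y⟫ * ⟪z, y⟫ := by
    simp only [hv, inner_sub_left, inner_sub_right, inner_smul_left, inner_smul_right, hzz,
      mul_one, hyy]
    rw [← inner_conj_symm y z]
    ring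
  have hxz : ‖⟪x, z⟫‖ = ‖(starRingEnd ℂ) ⟪z, x⟫‖ := by
    rw [RCLike.norm_conj]
    exact norm_inner_symm x z
  have hnu : ‖u‖ ^ 2 = 1 - ‖⟪x, z⟫‖ ^ 2 := by
    have h := @inner_self_eq_norm_sq ℂ _ _ _ _ u
    rw [huu, re_one_sub] at h
    rw [← h, hxz]
  have hnv : ‖v‖ ^ 2 = 1 - ‖⟪z, y⟫‖ ^ 2 := by
    have h := @inner_self_eq_norm_sq ℂ _ _ _ _ v
    rw [hvv, re_one_sub] at h
    rw [← h, RCLike.norm_conj]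
  -- Cauchy–Schwarz pieces
  set a := ‖⟪x, z⟫‖ with ha
  set b := ‖⟪z, y⟫‖ with hb
  set c := ‖⟪x, y⟫‖ with hc
  have ha0 : 0 ≤ a := norm_nonneg _
  have hb0 : 0 ≤ b := norm_nonneg _
  have hc0 : 0 ≤ c := norm_nonneg _
  have ha1 : a ≤ 1 := by
    calc a ≤ ‖x‖ * ‖z‖ := norm_inner_le_norm x z
    _ = 1 := by rw [hx, hz]; ring
  have hb1 : b ≤ 1 := by
    calc b ≤ ‖z‖ * ‖y‖ := norm_inner_le_norm z y
    _ = 1 := by rw [hz, hy]; ring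
  set s := Real.sqrt (1 - a ^ 2) with hs
  set t := Real.sqrt (1 - b ^ 2) with ht
  have hs0 : 0 ≤ s := Real.sqrt_nonneg _
  have ht0 : 0 ≤ t := Real.sqrt_nonneg _
  have hs2 : s ^ 2 = 1 - a ^ 2 := Real.sq_sqrt (by nlinarith)
  have ht2 : t ^ 2 = 1 - b ^ 2 := Real.sq_sqrt (by nlinarith)
  have hnu' : ‖u‖ = s := by
    rw [hs, ← hnu]; exact (Real.sqrt_sq (norm_nonneg u)).symm
  have hnv' : ‖v‖ = t := by
    rw [ht, ← hnv]; exact (Real.sqrt_sq (norm_nonneg v)).symm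
  have hcs : ‖⟪x, y⟫ - ⟪x, z⟫ * ⟪z, y⟫‖ ≤ s * t := by
    rw [← huv, ← hnu', ← hnv']
    exact norm_inner_le_norm u v
  have hkey : a * b - s * t ≤ c := by
    have h1 : ‖⟪x, z⟫ * ⟪z, y⟫‖ - ‖⟪x, y⟫‖ ≤ ‖⟪x, z⟫ * ⟪z, y⟫ - ⟪x, y⟫‖ :=
      norm_sub_norm_le _ _
    rw [norm_mul, norm_sub_rev] at h1
    linarith [hcs]
  -- final algebra
  exact real_alg a b c s t ha0 hb0 hc0 ha1 hb1 hs0 ht0 hs2 ht2 hkey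

/-- For unit vectors `x y z ∈ ℂⁿ` (with `x*x = y*y = z*z = 1`),
`√(1 − |x*y|²) ≤ √(1 − |x*z|²) + √(1 − |z*y|²)`, where `x*y = ∑ i, conj (x i) * y i`. -/
theorem sin_angle_triangle_complex (n : ℕ) (x y z : Fin n → ℂ)
    (hx : ∑ i, star (x i) * x i = 1)
    (hy : ∑ i, star (y i) * y i = 1)
    (hz : ∑ i, star (z i) * z i = 1) :
    Real.sqrt (1 - ‖∑ i, star (x i) * y i‖ ^ 2) ≤
      Real.sqrt (1 - ‖∑ i, star (x i) * z i‖ ^ 2) +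
      Real.sqrt (1 - ‖∑ i, star (z i) * y i‖ ^ 2) := by
  set f : (Fin n → ℂ) → EuclideanSpace ℂ (Fin n) := fun u => (WithLp.equiv 2 (Fin n → ℂ)).symm u with hf
  have hinner : ∀ u v : Fin n → ℂ, (⟪f u, f v⟫ : ℂ) = ∑ i, star (u i) * v i := by
    intro u v
    rw [PiLp.inner_apply]
    refine Finset.sum_congr rfl fun i _ => ?_
    rw [RCLike.inner_apply, mul_comm]
    rfl
  have hnorm : ∀ u : Fin n → ℂ, (∑ i, star (u i) * u i = 1) → ‖f u‖ = 1 := by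
    intro u hu
    have h : (⟪f u, f u⟫ : ℂ) = 1 := by rw [hinner]; exact hu
    rw [inner_self_eq_norm_sq_to_K] at h
    have h2 : (‖f u‖ : ℂ) ^ 2 = 1 := h
    have h3 : ‖f u‖ ^ 2 = 1 := by exact_mod_cast h2
    nlinarith [norm_nonneg (f u)]
  have key := key_ineq (f x) (f y) (f z) (hnorm x hx) (hnorm y hy) (hnorm z hz)
  simpa only [hinner] using key
end

section
/- Let u, z, w ∈ ℝⁿ be unit vectors (‖u‖₂ = ‖z‖₂ = ‖w‖₂ = 1), and let α, σ ∈ (0,1] with α ≤ σ. Set δ = √(1−α²) − √(1−σ²) (so δ ∈ [0,1]). If |uᵀz| ≥ σ and |wᵀz| ≥ √(1−δ²), then |wᵀu| ≥ α. -/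
open scoped BigOperators

/-- Euclidean dot product on `ℝⁿ`. -/
noncomputable def dotR {n : ℕ} (u v : Fin n → ℝ) : ℝ := ∑ i, u i * v i

/-- Euclidean 2-norm on `ℝⁿ`. -/
noncomputable def nrm {n : ℕ} (v : Fin n → ℝ) : ℝ := Real.sqrt (∑ i, v i ^ 2)

/-- Scalar core of the correlated-regressor argument. -/
theorem correlated_regressor_scalar (t s c α σ : ℝ)
    (hα : 0 < α) (hσ : σ ≤ 1) (hασ : α ≤ σ)
    (ht1 : t ^ 2 ≤ 1) (hs1 : s ^ 2 ≤ 1)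
    (huz : σ ≤ |t|)
    (hwz : Real.sqrt (1 - (Real.sqrt (1 - α ^ 2) - Real.sqrt (1 - σ ^ 2)) ^ 2) ≤ |s|)
    (key : (c - t * s) ^ 2 ≤ (1 - t ^ 2) * (1 - s ^ 2)) :
    α ≤ |c| := by
  have hσ0 : 0 < σ := lt_of_lt_of_le hα hασ
  have hα1 : α ≤ 1 := le_trans hασ hσ
  have hσsq : σ ^ 2 ≤ 1 := by nlinarith
  have hαsq : α ^ 2 ≤ 1 := by nlinarith
  set s1 : ℝ := Real.sqrt (1 - σ ^ 2) with hs1def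
  set a1 : ℝ := Real.sqrt (1 - α ^ 2) with ha1def
  have hs1nn : 0 ≤ s1 := Real.sqrt_nonneg _
  have ha1nn : 0 ≤ a1 := Real.sqrt_nonneg _
  have hs1sq : s1 ^ 2 = 1 - σ ^ 2 := Real.sq_sqrt (by linarith)
  have ha1sq : a1 ^ 2 = 1 - α ^ 2 := Real.sq_sqrt (by linarith)
  have hδnn : 0 ≤ a1 - s1 := by
    have h := Real.sqrt_le_sqrt (show (1 : ℝ) - σ ^ 2 ≤ 1 - α ^ 2 by nlinarith)
    rw [← hs1def, ← ha1def] at h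
    linarith
  set δ : ℝ := a1 - s1 with hδdef
  have ha1le : a1 ≤ 1 := by
    have h := Real.sqrt_le_sqrt (show (1 : ℝ) - α ^ 2 ≤ 1 by nlinarith)
    rw [← ha1def, Real.sqrt_one] at h
    exact h
  have hδ1 : δ ≤ 1 := by rw [hδdef]; linarith
  have hδsq : δ ^ 2 ≤ 1 := by nlinarith
  set q : ℝ := Real.sqrt (1 - δ ^ 2) with hqdef
  have hqnn : 0 ≤ q := Real.sqrt_nonneg _
  have hqsq : q ^ 2 = 1 - δ ^ 2 := Real.sq_sqrt (by linarith)
  have hqs : q ≤ |s| := hwz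
  -- squares of the hypotheses
  have hq2 : 1 - δ ^ 2 ≤ s ^ 2 := by
    have h := pow_le_pow_left₀ hqnn hqs 2
    rw [sq_abs] at h
    linarith
  have ht2 : σ ^ 2 ≤ t ^ 2 := by
    have h := pow_le_pow_left₀ hσ0.le huz 2
    rw [sq_abs] at h
    linarith
  -- bound the Cauchy-Schwarz defect
  have hprod : (1 - t ^ 2) * (1 - s ^ 2) ≤ (s1 * δ) ^ 2 := by
    have h1 : 1 - t ^ 2 ≤ s1 ^ 2 := by linarith
    have h2 : 1 - s ^ 2 ≤ δ ^ 2 := by linarith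
    have h3 : (0 : ℝ) ≤ 1 - s ^ 2 := by linarith
    calc (1 - t ^ 2) * (1 - s ^ 2) ≤ s1 ^ 2 * δ ^ 2 :=
          mul_le_mul h1 h2 h3 (sq_nonneg s1)
      _ = (s1 * δ) ^ 2 := by ring
  have h0 : 0 ≤ s1 * δ := mul_nonneg hs1nn hδnn
  have habs1 : |c - t * s| ≤ s1 * δ := by
    have h : (c - t * s) ^ 2 ≤ (s1 * δ) ^ 2 := le_trans key hprod
    calc |c - t * s| = Real.sqrt ((c - t * s) ^ 2) := (Real.sqrt_sq_eq_abs _).symm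
      _ ≤ Real.sqrt ((s1 * δ) ^ 2) := Real.sqrt_le_sqrt h
      _ = s1 * δ := Real.sqrt_sq h0
  have htsge : σ * q ≤ |t * s| := by
    rw [abs_mul]
    exact mul_le_mul huz hqs hqnn (abs_nonneg t)
  -- the key scalar inequality : α + s1*δ ≤ σ*q
  have hrel : a1 ^ 2 - s1 ^ 2 = σ ^ 2 - α ^ 2 := by rw [ha1sq, hs1sq]; ring
  have hpos : 0 ≤ 2 * s1 * ((a1 - s1) * (1 - α)) := by
    have : (0 : ℝ) ≤ 1 - α := by linarith
    positivity
  have hmain : α ^ 2 + 2 * α * s1 * δ + δ ^ 2 ≤ σ ^ 2 := by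
    rw [hδdef]
    linarith [hrel, hpos]
  have h5 : s1 ^ 2 * δ ^ 2 + σ ^ 2 * δ ^ 2 = δ ^ 2 := by rw [hs1sq]; ring
  have h6 : (σ * q) ^ 2 = σ ^ 2 - σ ^ 2 * δ ^ 2 := by rw [mul_pow, hqsq]; ring
  have hsq : (α + s1 * δ) ^ 2 ≤ (σ * q) ^ 2 := by linarith [hmain, h5, h6]
  have hfin : α + s1 * δ ≤ σ * q := by
    have h1 : 0 ≤ α + s1 * δ := by positivity
    have h2 : 0 ≤ σ * q := mul_nonneg hσ0.le hqnn
    have h := Real.sqrt_le_sqrt hsq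
    rwa [Real.sqrt_sq h1, Real.sqrt_sq h2] at h
  have htri : |t * s| ≤ |c| + |c - t * s| := by
    calc |t * s| = |c - (c - t * s)| := by ring_nf
      _ ≤ |c| + |c - t * s| := abs_sub _ _
  linarith

/-- For unit vectors `u z w ∈ ℝⁿ` and `0 < α ≤ σ ≤ 1`, with
`δ = √(1−α²) − √(1−σ²)`, if `|uᵀz| ≥ σ` and `|wᵀz| ≥ √(1−δ²)`, then `|wᵀu| ≥ α`. -/
theorem correlated_regressor (n : ℕ) (u z w : Fin n → ℝ)
    (hu : nrm u = 1) (hz : nrm z = 1) (hw : nrm w = 1)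
    (α σ : ℝ) (hα : 0 < α) (hσ : σ ≤ 1) (hασ : α ≤ σ)
    (huz : σ ≤ |dotR u z|)
    (hwz : Real.sqrt (1 - (Real.sqrt (1 - α ^ 2) - Real.sqrt (1 - σ ^ 2)) ^ 2)
            ≤ |dotR w z|) :
    α ≤ |dotR w u| := by
  have hu2 : (∑ i, u i ^ 2) = 1 := Real.sqrt_eq_one.mp hu
  have hz2 : (∑ i, z i ^ 2) = 1 := Real.sqrt_eq_one.mp hz
  have hw2 : (∑ i, w i ^ 2) = 1 := Real.sqrt_eq_one.mp hw
  have hts : dotR u z = ∑ i, u i * z i := rfl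
  have hss : dotR w z = ∑ i, w i * z i := rfl
  have hc : dotR w u = ∑ i, u i * w i := by
    unfold dotR; exact Finset.sum_congr rfl fun i _ => mul_comm _ _
  set t : ℝ := ∑ i, u i * z i with htdef
  set s : ℝ := ∑ i, w i * z i with hsdef
  set c : ℝ := ∑ i, u i * w i with hcdef
  have ht1 : t ^ 2 ≤ 1 := by
    have h := Finset.sum_mul_sq_le_sq_mul_sq Finset.univ u z
    rw [hu2, hz2] at h; simpa [htdef] using h
  have hs1 : s ^ 2 ≤ 1 := by
    have h := Finset.sum_mul_sq_le_sq_mul_sq Finset.univ w z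
    rw [hw2, hz2] at h; simpa [hsdef] using h
  have e1 : (∑ i, (u i - t * z i) * (w i - s * z i)) = c - t * s := by
    have expand : ∀ i, (u i - t * z i) * (w i - s * z i)
        = (u i * w i) - s * (u i * z i) - t * (w i * z i) + (t * s) * (z i ^ 2) :=
      fun i => by ring
    rw [Finset.sum_congr rfl fun i _ => expand i]
    rw [Finset.sum_add_distrib, Finset.sum_sub_distrib, Finset.sum_sub_distrib,
      ← Finset.mul_sum, ← Finset.mul_sum, ← Finset.mul_sum, hz2, ← htdef, ← hsdef, ← hcdef]
    ring
  have e2 : (∑ i, (u i - t * z i) ^ 2) = 1 - t ^ 2 := by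
    have expand : ∀ i, (u i - t * z i) ^ 2
        = u i ^ 2 - (2 * t) * (u i * z i) + (t ^ 2) * (z i ^ 2) := fun i => by ring
    rw [Finset.sum_congr rfl fun i _ => expand i]
    rw [Finset.sum_add_distrib, Finset.sum_sub_distrib,
      ← Finset.mul_sum, ← Finset.mul_sum, hz2, hu2, ← htdef]
    ring
  have e3 : (∑ i, (w i - s * z i) ^ 2) = 1 - s ^ 2 := by
    have expand : ∀ i, (w i - s * z i) ^ 2
        = w i ^ 2 - (2 * s) * (w i * z i) + (s ^ 2) * (z i ^ 2) := fun i => by ring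
    rw [Finset.sum_congr rfl fun i _ => expand i]
    rw [Finset.sum_add_distrib, Finset.sum_sub_distrib,
      ← Finset.mul_sum, ← Finset.mul_sum, hz2, hw2, ← hsdef]
    ring
  have key : (c - t * s) ^ 2 ≤ (1 - t ^ 2) * (1 - s ^ 2) := by
    have h := Finset.sum_mul_sq_le_sq_mul_sq Finset.univ
      (fun i => u i - t * z i) (fun i => w i - s * z i)
    rwa [e1, e2, e3] at h
  rw [hts] at huz
  rw [hss] at hwz
  rw [hc]
  exact correlated_regressor_scalar t s c α σ hα hσ hασ ht1 hs1 huz hwz key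
end
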